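/- Let M satisfy the Standard Imitation assumption with ρ(s) > 0 for all s ∈ S, and let P̂_h : S × A → ℝ satisfy P̂_h ≥ 0, P̂_h(s,a) = 0 for a ≠ a¹, and Σ_s P̂_h(s,a¹) = 1 for each h. For each h let S¹_h = {s : P̂_h(s,a¹) < ρ(s)}. Let π be a random policy whose coordinates π_h(a¹|s) are independent, drawn uniformly from the interval [P̂_h(s,a¹)/ρ(s), 1] when s ∈ S¹_h, and equal to 1 when s ∉ S¹_h (with the remaining probability mass on non-a¹ actions assigned in any fixed way). Then V^{π^E} − E[V^{π}] = (1/4) Σ_{h=1}^H Σ_{s∈S} |P̂_h(s,a¹) − ρ(s)|. -/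

import Mathlib

open Finset

/-- State distribution `d^π_h` of a policy `π` in an episodic tabular MDP
(time steps are 0-indexed: `stateDist ρ P π 0 = ρ`). -/
noncomputable def stateDist {S A : Type*} [Fintype S] [Fintype A] (ρ : S → ℝ)
    (P : ℕ → S → A → S → ℝ) (π : ℕ → S → A → ℝ) : ℕ → S → ℝ
  | 0 => ρ
  | h + 1 => fun s' => ∑ s : S, ∑ a : A, stateDist ρ P π h s * π h s a * P h s a s'

/-- State-action distribution `P^π_h(s,a) = d^π_h(s) π_h(a|s)`. -/
noncomputable def saDist {S A : Type*} [Fintype S] [Fintype A] (ρ : S → ℝ)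
    (P : ℕ → S → A → S → ℝ) (π : ℕ → S → A → ℝ) (h : ℕ) (s : S) (a : A) : ℝ :=
  stateDist ρ P π h s * π h s a

/-- Policy value `V^π = Σ_{h<H} Σ_{(s,a)} P^π_h(s,a) r_h(s,a)`. -/
noncomputable def policyValue {S A : Type*} [Fintype S] [Fintype A] (ρ : S → ℝ)
    (P : ℕ → S → A → S → ℝ) (π : ℕ → S → A → ℝ) (r : ℕ → S → A → ℝ) (H : ℕ) : ℝ :=
  ∑ h ∈ Finset.range H, ∑ s : S, ∑ a : A, saDist ρ P π h s a * r h s a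

/-- `π` is a (Markovian, non-stationary) policy. -/
def IsPolicy {S A : Type*} [Fintype A] (π : ℕ → S → A → ℝ) : Prop :=
  ∀ h s, (∀ a, 0 ≤ π h s a) ∧ (∑ a : A, π h s a) = 1

/-- `P` is a transition function. -/
def IsTransition {S A : Type*} [Fintype S] (P : ℕ → S → A → S → ℝ) : Prop :=
  ∀ h s a, (∀ s', 0 ≤ P h s a s') ∧ (∑ s' : S, P h s a s') = 1

/-- `ρ` is an initial state distribution. -/
def IsInitDist {S : Type*} [Fintype S] (ρ : S → ℝ) : Prop :=
  (∀ s, 0 ≤ ρ s) ∧ (∑ s : S, ρ s) = 1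

/-- Rewards take values in `[0,1]`. -/
def IsReward {S A : Type*} (r : ℕ → S → A → ℝ) : Prop :=
  ∀ h s a, 0 ≤ r h s a ∧ r h s a ≤ 1

/-- The VAIL state-action distribution matching objective
`L(π) = Σ_{h<H} Σ_{(s,a)} |P^π_h(s,a) − Q_h(s,a)|`. -/
noncomputable def vailLoss {S A : Type*} [Fintype S] [Fintype A] (ρ : S → ℝ)
    (P : ℕ → S → A → S → ℝ) (π : ℕ → S → A → ℝ) (Q : ℕ → S → A → ℝ) (H : ℕ) : ℝ :=
  ∑ h ∈ Finset.range H, ∑ s : S, ∑ a : A, |saDist ρ P π h s a - Q h s a|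

/-- The Standard Imitation assumption: every state is absorbing (identical transitions for all
actions), the expert action `a1` has reward 1 and all other actions have reward 0. -/
def StandardImitation {S A : Type*} [DecidableEq S]
    (P : ℕ → S → A → S → ℝ) (r : ℕ → S → A → ℝ) (a1 : A) : Prop :=
  (∀ h s a s', P h s a s' = if s' = s then (1 : ℝ) else 0) ∧
  (∀ h s, r h s a1 = 1) ∧
  (∀ h (s : S) (a : A), a ≠ a1 → r h s a = 0)

lemma stateDist_absorbing {S A : Type*} [Fintype S] [Fintype A] [DecidableEq S]
    {ρ : S → ℝ} {P : ℕ → S → A → S → ℝ} {π : ℕ → S → A → ℝ}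
    (hP : ∀ h s a s', P h s a s' = if s' = s then (1 : ℝ) else 0)
    (hπ : IsPolicy π) : ∀ h, stateDist ρ P π h = ρ := by
  intro h
  induction h with
  | zero => rfl
  | succ n ih =>
    funext s'
    show (∑ s : S, ∑ a : A, stateDist ρ P π n s * π n s a * P n s a s') = ρ s'
    rw [Finset.sum_eq_single s']
    · simp only [ih, hP, if_pos rfl, if_true, mul_one, ← Finset.mul_sum, (hπ n s').2]
    · intro b _ hb
      apply Finset.sum_eq_zero
      intro a _
      simp [hP, Ne.symm hb]
    · intro habs; exact absurd (Finset.mem_univ s') habs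

lemma policyValue_SI {S A : Type*} [Fintype S] [Fintype A] [DecidableEq S]
    {ρ : S → ℝ} {P : ℕ → S → A → S → ℝ} {r : ℕ → S → A → ℝ} {a1 : A}
    {π : ℕ → S → A → ℝ}
    (hSI : StandardImitation P r a1) (hπ : IsPolicy π) (H : ℕ) :
    policyValue ρ P π r H = ∑ h ∈ Finset.range H, ∑ s : S, ρ s * π h s a1 := by
  unfold policyValue saDist
  refine Finset.sum_congr rfl fun h _ => Finset.sum_congr rfl fun s _ => ?_
  rw [Finset.sum_eq_single a1]
  · rw [stateDist_absorbing hSI.1 hπ, hSI.2.1, mul_one]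
  · intro a _ ha; rw [hSI.2.2 h s a ha, mul_zero]
  · intro habs; exact absurd (Finset.mem_univ a1) habs

lemma abs_eq_add_two_max (x : ℝ) : |x| = x + 2 * max (-x) 0 := by
  rcases le_total 0 x with hx | hx
  · rw [abs_of_nonneg hx, max_eq_right (by linarith)]; ring
  · rw [abs_of_nonpos hx, max_eq_left (by linarith)]; ring

open MeasureTheory ProbabilityTheory in
/-- on any Standard Imitation instance, consider a random policy `π` whose
coordinates `π_h(a¹|s)` are independent, uniform on `[Q_h(s,a¹)/ρ(s), 1]` for states with
`Q_h(s,a¹) < ρ(s)`, and equal to `1` otherwise.  Then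
`V^{πE} − E[V^{π}] = (1/4) Σ_h Σ_s |Q_h(s,a¹) − ρ(s)|`. -/
theorem standard_imitation_random_minimizer_gap {S A : Type*} [Fintype S] [Fintype A]
    [Nonempty S] [Nonempty A] [DecidableEq S]
    {Ω : Type*} [MeasurableSpace Ω] (μ : Measure Ω) [IsProbabilityMeasure μ]
    (ρ : S → ℝ) (P : ℕ → S → A → S → ℝ) (r : ℕ → S → A → ℝ)
    (πE : ℕ → S → A → ℝ) (a1 : A) (Q : ℕ → S → A → ℝ) (H : ℕ) (hH : 1 ≤ H)
    (hρ : IsInitDist ρ) (hP : IsTransition P) (hr : IsReward r) (hE : IsPolicy πE)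
    (hSI : StandardImitation P r a1)
    (hEa : ∀ h s, πE h s a1 = 1)
    (hρpos : ∀ s, 0 < ρ s)
    (hQ0 : ∀ h < H, ∀ s a, 0 ≤ Q h s a)
    (hQz : ∀ h < H, ∀ (s : S) (a : A), a ≠ a1 → Q h s a = 0)
    (hQ1 : ∀ h < H, (∑ s : S, Q h s a1) = 1)
    (π : Ω → ℕ → S → A → ℝ)
    (hpol : ∀ ω, IsPolicy (π ω))
    (hone : ∀ h < H, ∀ s, ρ s ≤ Q h s a1 → ∀ ω, π ω h s a1 = 1)
    (hunif : ∀ h < H, ∀ s, Q h s a1 < ρ s →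
        Measure.map (fun ω => π ω h s a1) μ
          = (ENNReal.ofReal (1 - Q h s a1 / ρ s))⁻¹ •
              (volume.restrict (Set.Icc (Q h s a1 / ρ s) 1)))
    (hindep : iIndepFun
        (fun (p : {q : ℕ × S // q.1 < H}) (ω : Ω) => π ω p.1.1 p.1.2 a1) μ) :
    policyValue ρ P πE r H - ∫ ω, policyValue ρ P (π ω) r H ∂μ
      = (1 / 4) * ∑ h ∈ Finset.range H, ∑ s : S, |Q h s a1 - ρ s| := by
  -- basic facts about q = Q/ρ
  have hqfacts : ∀ h < H, ∀ s, Q h s a1 < ρ s →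
      0 ≤ Q h s a1 / ρ s ∧ Q h s a1 / ρ s < 1 := by
    intro h hh s hs
    constructor
    · exact div_nonneg (hQ0 h hh s a1) (hρpos s).le
    · rw [div_lt_one (hρpos s)]; exact hs
  -- AEMeasurability of each coordinate
  have haem : ∀ h < H, ∀ s, AEMeasurable (fun ω => π ω h s a1) μ := by
    intro h hh s
    rcases le_or_gt (ρ s) (Q h s a1) with hc | hc
    · have : (fun ω => π ω h s a1) = fun _ => (1 : ℝ) := funext (hone h hh s hc)
      rw [this]; exact aemeasurable_const
    · by_contra hm
      have h0 := Measure.map_of_not_aemeasurable hm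
      rw [hunif h hh s hc] at h0
      obtain ⟨hq0, hq1⟩ := hqfacts h hh s hc
      have hne : (ENNReal.ofReal (1 - Q h s a1 / ρ s)) ≠ 0 := by
        intro h0
        rw [ENNReal.ofReal_eq_zero] at h0
        linarith
      have := congrArg (fun ν : Measure ℝ => ν Set.univ) h0
      simp only [Measure.smul_apply, Measure.restrict_apply MeasurableSet.univ,
        Set.univ_inter, Real.volume_Icc, Measure.coe_zero, Pi.zero_apply,
        smul_eq_mul] at this
      rw [ENNReal.inv_mul_cancel hne (by exact ENNReal.ofReal_ne_top)] at this
      norm_num at this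
  -- bounds on coordinates
  have hbd : ∀ ω h s, 0 ≤ π ω h s a1 ∧ π ω h s a1 ≤ 1 := by
    intro ω h s
    obtain ⟨hnn, hsum⟩ := hpol ω h s
    refine ⟨hnn a1, ?_⟩
    calc π ω h s a1 ≤ ∑ a : A, π ω h s a :=
        Finset.single_le_sum (fun a _ => hnn a) (Finset.mem_univ a1)
      _ = 1 := hsum
  -- integrability of each coordinate
  have hint : ∀ h < H, ∀ s, Integrable (fun ω => π ω h s a1) μ := by
    intro h hh s
    refine Integrable.mono' (integrable_const (1:ℝ)) (haem h hh s).aestronglyMeasurable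
      (Filter.Eventually.of_forall fun ω => ?_)
    rw [Real.norm_eq_abs, abs_of_nonneg (hbd ω h s).1]; exact (hbd ω h s).2
  -- expectation of each coordinate
  have hmean : ∀ h < H, ∀ s,
      ∫ ω, π ω h s a1 ∂μ = if Q h s a1 < ρ s then (1 + Q h s a1 / ρ s) / 2 else 1 := by
    intro h hh s
    rcases lt_or_ge (Q h s a1) (ρ s) with hc | hc
    · rw [if_pos hc]
      set q := Q h s a1 / ρ s with hq
      obtain ⟨hq0, hq1⟩ := hqfacts h hh s hc
      have := (integral_map (haem h hh s) (aestronglyMeasurable_id) :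
        ∫ y, id y ∂(Measure.map (fun ω => π ω h s a1) μ) = ∫ ω, id (π ω h s a1) ∂μ)
      simp only [id] at this
      rw [← this, hunif h hh s hc, integral_smul_measure]
      have hIcc : ∫ y, y ∂(volume.restrict (Set.Icc q 1)) = (1 - q^2)/2 := by
        have h1 : ∫ y in Set.Icc q 1, y = ∫ y in Set.Ioc q 1, y :=
          integral_Icc_eq_integral_Ioc
        have h2 : ∫ y in q..1, y = ∫ y in Set.Ioc q 1, y :=
          intervalIntegral.integral_of_le hq1.le
        have h3 : ∫ y in q..1, y = ((1:ℝ)^2 - q^2)/2 := integral_id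
        rw [show (∫ y, y ∂(volume.restrict (Set.Icc q 1))) = ∫ y in Set.Icc q 1, y from rfl,
          h1, ← h2, h3]
        ring
      rw [hIcc, ENNReal.toReal_inv, ENNReal.toReal_ofReal (by linarith)]
      have hne : (1 : ℝ) - q ≠ 0 := by linarith
      rw [← hq, smul_eq_mul, show (1 - q^2)/2 = (1-q)*((1+q)/2) by ring, ← mul_assoc,
        inv_mul_cancel₀ hne, one_mul]
    · rw [if_neg (not_lt.mpr hc)]
      have : (fun ω => π ω h s a1) = fun _ => (1 : ℝ) := funext (hone h hh s hc)
      rw [this, integral_const, probReal_univ, one_smul]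
  -- rewrite both policy values
  rw [policyValue_SI hSI hE H]
  have hπval : ∀ ω, policyValue ρ P (π ω) r H
      = ∑ h ∈ Finset.range H, ∑ s : S, ρ s * π ω h s a1 :=
    fun ω => policyValue_SI hSI (hpol ω) H
  have hInt2 : ∀ h ∈ Finset.range H, ∀ s : S,
      Integrable (fun ω => ρ s * π ω h s a1) μ := fun h hh s =>
    (hint h (Finset.mem_range.mp hh) s).const_mul _
  have hiv : ∫ ω, policyValue ρ P (π ω) r H ∂μ
      = ∑ h ∈ Finset.range H, ∑ s : S, ρ s * ∫ ω, π ω h s a1 ∂μ := by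
    rw [integral_congr_ae (Filter.Eventually.of_forall hπval),
      integral_finset_sum _ (fun h hh =>
        integrable_finset_sum _ (fun s _ => hInt2 h hh s))]
    refine Finset.sum_congr rfl fun h hh => ?_
    rw [integral_finset_sum _ (fun s _ => hInt2 h hh s)]
    exact Finset.sum_congr rfl fun s _ => integral_const_mul _ _
  rw [hiv, ← Finset.sum_sub_distrib]
  rw [Finset.mul_sum]
  refine Finset.sum_congr rfl fun h hh => ?_
  have hhH := Finset.mem_range.mp hh
  rw [← Finset.sum_sub_distrib]
  -- per-state difference equals max (ρ - Q) 0 / 2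
  have hterm : ∀ s : S, ρ s * πE h s a1 - ρ s * ∫ ω, π ω h s a1 ∂μ
      = max (ρ s - Q h s a1) 0 / 2 := by
    intro s
    rw [hEa h s, mul_one, hmean h hhH s]
    rcases lt_or_ge (Q h s a1) (ρ s) with hc | hc
    · rw [if_pos hc, max_eq_left (by linarith)]
      have : ρ s * ((1 + Q h s a1 / ρ s) / 2)
          = (ρ s + Q h s a1) / 2 := by
        field_simp [(hρpos s).ne']
      rw [this]; ring
    · rw [if_neg (not_lt.mpr hc), max_eq_right (by linarith)]; ring
  rw [Finset.sum_congr rfl fun s _ => hterm s]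
  -- sum identity
  have hzero : ∑ s : S, (Q h s a1 - ρ s) = 0 := by
    rw [Finset.sum_sub_distrib, hQ1 h hhH, hρ.2, sub_self]
  have habs : ∑ s : S, |Q h s a1 - ρ s|
      = ∑ s : S, ((Q h s a1 - ρ s) + 2 * max (ρ s - Q h s a1) 0) := by
    refine Finset.sum_congr rfl fun s _ => ?_
    rw [abs_eq_add_two_max]; ring_nf
  rw [habs, Finset.sum_add_distrib, hzero, zero_add, ← Finset.mul_sum,
    ← Finset.sum_div]
  ring
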